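/- arXiv:0806.0309 — 6 statements merged into one kernel-verified Lean document; each statement's English description precedes it below -/
import Mathlib

section
/- Every finite abelian group is isomorphic to its own dual in the following sense: if G is a finite abelian group and H ≤ G is a subgroup, then there exists a subgroup K ≤ G with K ≅ G/H and G/K ≅ H. -/
open Function

noncomputable section

namespace Stmt2Aux

variable {A B : Type*} [AddCommGroup A] [AddCommGroup B]

/-- Precomposition with `f` as an additive hom on character modules. -/
def resHom (f : A →+ B) : CharacterModule B →+ CharacterModule A where
  toFun c := (c : B →+ AddCircle (1 : ℚ)).comp f
  map_zero' := by ext; rfl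
  map_add' c c' := by ext; rfl

@[simp] lemma resHom_apply (f : A →+ B) (c : CharacterModule B) (a : A) :
    resHom f c a = c (f a) := rfl

/-- Characters transfer along isomorphisms. -/
def charCongr (e : A ≃+ B) : CharacterModule A ≃+ CharacterModule B where
  toFun c := (c : A →+ AddCircle (1 : ℚ)).comp e.symm.toAddMonoidHom
  invFun c := (c : B →+ AddCircle (1 : ℚ)).comp e.toAddMonoidHom
  left_inv c := by ext a; exact congrArg c (e.symm_apply_apply a)
  right_inv c := by ext b; exact congrArg c (e.apply_symm_apply b)
  map_add' c c' := by ext b; rfl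

lemma resHom_surjective (f : A →+ B) (hf : Injective f) : Surjective (resHom f) := by
  intro c
  obtain ⟨d, hd⟩ := CharacterModule.dual_surjective_of_injective f.toIntLinearMap hf c
  exact ⟨d, hd⟩

lemma charZMod (n : ℕ) (hn : 0 < n) : Nonempty (CharacterModule (ZMod n) ≃+ ZMod n) := by
  have hnQ : (n : ℚ) ≠ 0 := by exact_mod_cast hn.ne'
  set q : ℤ →+ AddCircle (1 : ℚ) :=
    (QuotientAddGroup.mk' (AddSubgroup.zmultiples (1 : ℚ))).comp (zmultiplesHom ℚ ((n : ℚ)⁻¹)) with hq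
  have hq_apply : ∀ k : ℤ, q k = (((k : ℚ) / n : ℚ) : AddCircle (1 : ℚ)) := by
    intro k
    show (((k • (n:ℚ)⁻¹ : ℚ)) : AddCircle (1:ℚ)) = _
    rw [zsmul_eq_mul, div_eq_mul_inv]
  have hqn : q (n : ℤ) = 0 := by
    have h1 : (((n:ℤ) : ℚ)) / (n:ℚ) = 1 := by push_cast; exact div_self hnQ
    rw [hq_apply, h1, QuotientAddGroup.eq_zero_iff]
    exact ⟨1, one_zsmul _⟩
  set base : ZMod n →+ AddCircle (1 : ℚ) := ZMod.lift n ⟨q, hqn⟩ with hbase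
  have hbase_apply : ∀ k : ℤ, base ((k : ZMod n)) = (((k : ℚ) / n : ℚ) : AddCircle (1:ℚ)) :=
    fun k => by rw [hbase, ZMod.lift_coe]; exact hq_apply k
  have hnbase : (zmultiplesHom _ base) (n : ℤ) = 0 := by
    ext y
    obtain ⟨k, rfl⟩ := ZMod.intCast_surjective y
    show ((n : ℤ) • base) _ = 0
    rw [AddMonoidHom.smul_apply, ← map_zsmul, ← Int.cast_smul_eq_zsmul (ZMod n)]
    simp
  set e : ZMod n →+ (ZMod n →+ AddCircle (1 : ℚ)) := ZMod.lift n ⟨zmultiplesHom _ base, hnbase⟩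
    with he
  have he_apply : ∀ k : ℤ, e (k : ZMod n) = k • base := fun k => by rw [he, ZMod.lift_coe]; rfl
  have hek : ∀ k l : ℤ, e (k : ZMod n) (l : ZMod n) = (((k * l : ℚ) / n : ℚ) : AddCircle (1:ℚ)) := by
    intro k l
    rw [he_apply, AddMonoidHom.smul_apply, hbase_apply, ← AddCircle.coe_zsmul]
    congr 1
    rw [zsmul_eq_mul]
    ring
  have hinj : Injective e := by
    intro x y hxy
    obtain ⟨k, rfl⟩ := ZMod.intCast_surjective x
    obtain ⟨l, rfl⟩ := ZMod.intCast_surjective y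
    have h1 : e (k : ZMod n) ((1 : ℤ) : ZMod n) = e (l : ZMod n) ((1 : ℤ) : ZMod n) := by rw [hxy]
    rw [hek, hek] at h1
    simp only [Int.cast_one, mul_one] at h1
    have h3 : ((k : ℚ) / n - (l : ℚ) / n) ∈ AddSubgroup.zmultiples (1 : ℚ) := by
      rw [← QuotientAddGroup.eq_zero_iff, QuotientAddGroup.mk_sub]
      rw [show ((((k:ℚ) / n : ℚ)) : AddCircle (1:ℚ)) = (((l:ℚ) / n : ℚ) : AddCircle (1:ℚ)) from h1]
      exact sub_self _
    obtain ⟨m, hm⟩ := AddSubgroup.mem_zmultiples_iff.mp h3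
    rw [zsmul_eq_mul, mul_one] at hm
    have hkl : ((k - l : ℤ) : ℚ) = (((n : ℤ) * m : ℤ) : ℚ) := by push_cast; field_simp at hm; linarith
    have hdvd : (n : ℤ) ∣ k - l := ⟨m, by exact_mod_cast hkl⟩
    have h0 := (ZMod.intCast_zmod_eq_zero_iff_dvd (k - l) n).mpr hdvd
    push_cast at h0
    exact sub_eq_zero.mp h0
  have hsurj : Surjective e := by
    intro c
    have hc : (n : ℤ) • c 1 = 0 := by
      rw [← map_zsmul]
      have h2 : (n : ℤ) • (1 : ZMod n) = 0 := by
        rw [← Int.cast_smul_eq_zsmul (ZMod n)]; simp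
      rw [h2, map_zero]
    obtain ⟨r, hr⟩ := QuotientAddGroup.mk_surjective (c 1)
    have hr0 : ((n : ℤ) • r : ℚ) ∈ AddSubgroup.zmultiples (1 : ℚ) := by
      rw [← QuotientAddGroup.eq_zero_iff]
      rw [← hr, ← QuotientAddGroup.mk_zsmul] at hc
      exact hc
    obtain ⟨m, hm⟩ := AddSubgroup.mem_zmultiples_iff.mp hr0
    rw [zsmul_eq_mul, mul_one, zsmul_eq_mul] at hm
    have hrm : r = (m : ℚ) / n := by push_cast at hm; field_simp; linarith
    refine ⟨(m : ZMod n), ?_⟩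
    ext y
    obtain ⟨k, rfl⟩ := ZMod.intCast_surjective y
    have hky : ((k : ZMod n)) = k • (1 : ZMod n) := by simp
    have hcv : c ((k : ZMod n)) = (((m * k : ℚ) / n : ℚ) : AddCircle (1:ℚ)) := by
      rw [hky, map_zsmul, ← hr, ← AddCircle.coe_zsmul]
      congr 1
      rw [zsmul_eq_mul, hrm]
      ring
    rw [hek, hcv]
  exact ⟨(AddEquiv.ofBijective e ⟨hinj, hsurj⟩).symm⟩

/-- A finite abelian group is isomorphic to its character module. -/
lemma charSelf (A : Type*) [AddCommGroup A] [Finite A] :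
    Nonempty (CharacterModule A ≃+ A) := by
  classical
  obtain ⟨ι, hι, nf, hnf, ⟨f⟩⟩ := AddCommGroup.equiv_directSum_zmod_of_finite' A
  let g : A ≃+ ((i : ι) → ZMod (nf i)) := f.trans (DirectSum.addEquivProd _)
  let E1 : CharacterModule A ≃+ CharacterModule ((i : ι) → ZMod (nf i)) := charCongr g
  let E2 : CharacterModule ((i : ι) → ZMod (nf i)) ≃+ ((i : ι) → CharacterModule (ZMod (nf i))) :=
    Pi.addMonoidHomAddEquiv (fun i => ZMod (nf i)) (AddCircle (1 : ℚ))
  let E3 : ((i : ι) → CharacterModule (ZMod (nf i))) ≃+ ((i : ι) → ZMod (nf i)) :=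
    AddEquiv.piCongrRight fun i => Classical.choice (charZMod (nf i) (lt_trans one_pos (hnf i)))
  exact ⟨E1.trans <| E2.trans <| E3.trans g.symm⟩

theorem main (G : Type*) [AddCommGroup G] [Fintype G] (H : AddSubgroup G) :
    ∃ K : AddSubgroup G,
      Nonempty (K ≃+ G ⧸ H) ∧ Nonempty ((G ⧸ K) ≃+ H) := by
  classical
  let res : CharacterModule G →+ CharacterModule H := resHom H.subtype
  have hres : Surjective res := resHom_surjective H.subtype Subtype.val_injective
  let infl : CharacterModule (G ⧸ H) →+ CharacterModule G := resHom (QuotientAddGroup.mk' H)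
  have hinfl : Injective infl := by
    intro c c' hcc
    ext x
    obtain ⟨g, rfl⟩ := QuotientAddGroup.mk'_surjective H x
    exact DFunLike.congr_fun hcc g
  have hrange : infl.range = res.ker := by
    ext c
    constructor
    · rintro ⟨c', rfl⟩
      show res (infl c') = 0
      ext h
      show c' ((QuotientAddGroup.mk' H) (h : G)) = 0
      rw [show (QuotientAddGroup.mk' H) (h : G) = 0 from
        (QuotientAddGroup.eq_zero_iff _).mpr h.2, map_zero]
    · intro hc
      have hc' : ∀ x ∈ H, c x = 0 := by
        intro x hx
        have h1 := DFunLike.congr_fun (show res c = 0 from hc) (⟨x, hx⟩ : H)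
        exact h1
      refine ⟨QuotientAddGroup.lift H c hc', ?_⟩
      ext x
      exact QuotientAddGroup.lift_mk' H hc' x
  obtain ⟨eG⟩ := charSelf G
  obtain ⟨eH⟩ := charSelf H
  obtain ⟨eQ⟩ := charSelf (G ⧸ H)
  refine ⟨res.ker.map eG.toAddMonoidHom, ⟨?_⟩, ⟨?_⟩⟩
  · exact ((eG.addSubgroupMap res.ker).symm.trans
      ((AddEquiv.addSubgroupCongr hrange).symm.trans
        (AddMonoidHom.ofInjective hinfl).symm)).trans eQ
  · exact ((QuotientAddGroup.congr res.ker _ eG rfl).symm.trans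
      (QuotientAddGroup.quotientKerEquivOfSurjective res hres)).trans eH

end Stmt2Aux

end

theorem stmt2 (G : Type*) [AddCommGroup G] [Fintype G] (H : AddSubgroup G) :
    ∃ K : AddSubgroup G,
      Nonempty (K ≃+ G ⧸ H) ∧ Nonempty ((G ⧸ K) ≃+ H) :=
  Stmt2Aux.main G H
end

section
/- Let G be a finite abelian group with invariant factors m_1 | ... | m_r and let H ≤ G be a subgroup with invariant factors m'_1 | ... | m'_r (padded by 1's). If m'_t = m_t for some index t, then there exists a subgroup K ≤ H with K ≅ C_{m_t} such that K is a direct summand of both H and G. -/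
lemma list_get_mem' {α : Type*} (l : List α) (i : Fin l.length) : l.get i ∈ l := by
  rw [List.get_eq_getElem]
  exact List.getElem_mem _

lemma chain'_dvd_get {l : List ℕ} (h : l.Chain' (· ∣ ·)) {i j : Fin l.length}
    (hij : i ≤ j) : l.get i ∣ l.get j := by
  rcases eq_or_lt_of_le hij with h' | h'
  · rw [h']
  · have hp : l.Pairwise (· ∣ ·) := List.isChain_iff_pairwise.mp h
    exact List.pairwise_iff_getElem.mp hp i j i.isLt j.isLt h'

/-- If `v_p(n) ≤ a`, any `p`-torsion element of `ZMod n` in `p^a • ZMod n` is zero. -/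
lemma torsion_smul_eq_zero {n p a : ℕ} (hn : n ≠ 0) (hp : p.Prime)
    (hβ : n.factorization p ≤ a) (x : ZMod n) (h1 : p • x = 0)
    (h2 : ∃ u : ZMod n, p ^ a • u = x) : x = 0 := by
  obtain ⟨u, hu⟩ := h2
  set β := n.factorization p with hβdef
  set n₁ := n / p ^ β with hn₁
  have hmul : p ^ β * n₁ = n := Nat.ordProj_mul_ordCompl_eq_self n p
  have hnu : n • u = 0 := by
    have : ((n : ℕ) : ZMod n) = 0 := ZMod.natCast_self n
    rw [nsmul_eq_mul, this, zero_mul]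
  have hn₁x : n₁ • x = 0 := by
    have : n₁ * p ^ a = p ^ (a - β) * n := by
      rw [← hmul, mul_comm (p^β) n₁, ← mul_assoc, mul_comm (p^(a-β)) n₁,
        mul_assoc, ← pow_add]
      congr 2
      omega
    calc n₁ • x = n₁ • p ^ a • u := by rw [hu]
    _ = (n₁ * p ^ a) • u := (mul_nsmul' u n₁ (p^a)).symm
    _ = (p ^ (a - β) * n) • u := by rw [this]
    _ = p ^ (a - β) • (n • u) := mul_nsmul' u _ _
    _ = 0 := by rw [hnu, smul_zero]
  have hcop : Nat.Coprime p n₁ :=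
    (Nat.Prime.coprime_iff_not_dvd hp).mpr (Nat.not_dvd_ordCompl hp hn)
  obtain ⟨c, d, hcd⟩ := Nat.isCoprime_iff_coprime.mpr hcop
  calc x = (1 : ℤ) • x := (one_zsmul x).symm
  _ = (c * p + d * n₁) • x := by rw [hcd]
  _ = c • ((p:ℤ) • x) + d • ((n₁:ℤ) • x) := by
      rw [add_zsmul, mul_zsmul, mul_zsmul]
  _ = 0 := by
      rw [natCast_zsmul, natCast_zsmul, h1, hn₁x, smul_zero, smul_zero, add_zero]


lemma card_torsion_le {n p : ℕ} (hn : n ≠ 0) (hp : 0 < p) :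
    Nat.card {x : ZMod n // p • x = 0} ≤ p := by
  haveI : NeZero n := ⟨hn⟩
  set g := n.gcd p with hg
  have hgpos : 0 < g := Nat.gcd_pos_of_pos_left p (Nat.pos_of_ne_zero hn)
  have hgn : g ∣ n := Nat.gcd_dvd_left n p
  have hngpos : 0 < n / g := Nat.div_pos (Nat.le_of_dvd (Nat.pos_of_ne_zero hn) hgn) hgpos
  have key : ∀ x : ZMod n, p • x = 0 → (n / g) ∣ x.val := by
    intro x hx
    have h1 : ((p * x.val : ℕ) : ZMod n) = 0 := by
      rw [Nat.cast_mul, ZMod.natCast_val, ZMod.cast_id, ← nsmul_eq_mul, hx]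
    have h2 : n ∣ p * x.val := (ZMod.natCast_eq_zero_iff _ n).mp h1
    -- n ∣ p * val ⇒ (n/g) ∣ (p/g) * val ⇒ (n/g) ∣ val
    have h3 : (n / g) ∣ (p / g) * x.val := by
      obtain ⟨k, hk⟩ := h2
      refine ⟨k, ?_⟩
      apply Nat.eq_of_mul_eq_mul_left hgpos
      calc g * ((p / g) * x.val) = (g * (p / g)) * x.val := by ring
      _ = p * x.val := by rw [Nat.mul_div_cancel' (Nat.gcd_dvd_right n p)]
      _ = n * k := hk
      _ = (g * (n / g)) * k := by rw [Nat.mul_div_cancel' hgn]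
      _ = g * (n / g * k) := by ring
    rw [mul_comm] at h3
    exact (Nat.coprime_div_gcd_div_gcd hgpos).dvd_of_dvd_mul_right h3
  have hinj : Function.Injective
      (fun x : {x : ZMod n // p • x = 0} => x.1.val / (n / g)) := by
    rintro ⟨x, hx⟩ ⟨y, hy⟩ hxy
    simp only at hxy
    have ex : x.val = x.val / (n / g) * (n / g) := (Nat.div_mul_cancel (key x hx)).symm
    have ey : y.val = y.val / (n / g) * (n / g) := (Nat.div_mul_cancel (key y hy)).symm
    have : x.val = y.val := by rw [ex, ey, hxy]
    exact Subtype.ext (ZMod.val_injective n this)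
  have hbound : ∀ x : {x : ZMod n // p • x = 0}, x.1.val / (n / g) < p := by
    intro x
    have hvlt : x.1.val < n := ZMod.val_lt x.1
    have : x.1.val / (n / g) < g := by
      rw [Nat.div_lt_iff_lt_mul hngpos]
      calc x.1.val < n := hvlt
      _ = g * (n / g) := (Nat.mul_div_cancel' hgn).symm
    exact lt_of_lt_of_le this (Nat.le_of_dvd hp (Nat.gcd_dvd_right n p))
  calc Nat.card {x : ZMod n // p • x = 0}
      ≤ Nat.card (Fin p) := Nat.card_le_card_of_injective
        (fun x => (⟨_, hbound x⟩ : Fin p))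
        (fun x y h => hinj (by simpa using congrArg Fin.val h))
  _ = p := by simp

lemma card_torsion_smul_ge {n p a : ℕ} (hn : n ≠ 0) (hp : p.Prime) (ha : 0 < a)
    (hdvd : p ^ a ∣ n) :
    p ≤ Nat.card {x : ZMod n // p • x = 0 ∧ ∃ u : ZMod n, p ^ (a - 1) • u = x} := by
  haveI : NeZero n := ⟨hn⟩
  obtain ⟨c, hc⟩ := id hdvd
  set x₀ : ZMod n := ((n / p : ℕ) : ZMod n) with hx₀
  have hpn : p ∣ n := dvd_trans (dvd_pow_self p ha.ne') hdvd
  have hordx₀ : addOrderOf x₀ = p := by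
    rw [hx₀, ZMod.addOrderOf_coe _ hn, Nat.gcd_eq_right (Nat.div_dvd_of_dvd hpn),
      Nat.div_div_self hpn hn]
  have harith : p ^ (a - 1) * (n / p ^ a) = n / p := by
    rw [hc, Nat.mul_div_cancel_left c (pow_pos hp.pos a)]
    have : p ^ a = p * p ^ (a - 1) := by
      conv_lhs => rw [show a = 1 + (a - 1) by omega]
      rw [pow_add, pow_one]
    rw [this, mul_assoc, Nat.mul_div_cancel_left _ hp.pos]
  have hmem : ∀ z ∈ AddSubgroup.zmultiples x₀,
      p • z = 0 ∧ ∃ u : ZMod n, p ^ (a - 1) • u = z := by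
    intro z hz
    obtain ⟨k, hk⟩ := AddSubgroup.mem_zmultiples_iff.mp hz
    constructor
    · rw [← hk, smul_comm]
      have : p • x₀ = 0 := by
        rw [hx₀, nsmul_eq_mul, ← Nat.cast_mul,
          Nat.mul_div_cancel' hpn, ZMod.natCast_self]
      rw [this, smul_zero]
    · refine ⟨k • ((n / p ^ a : ℕ) : ZMod n), ?_⟩
      rw [smul_comm]
      rw [nsmul_eq_mul, ← Nat.cast_mul, harith, ← hx₀, hk]
  have hinj : Function.Injective (fun z : AddSubgroup.zmultiples x₀ =>
      (⟨z.1, hmem z.1 z.2⟩ : {x : ZMod n // p • x = 0 ∧ ∃ u : ZMod n, p ^ (a-1) • u = x})) := by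
    rintro ⟨y, hy⟩ ⟨z, hz⟩ h
    have h2 : y = z := congrArg Subtype.val h
    exact Subtype.ext h2
  calc p = addOrderOf x₀ := hordx₀.symm
  _ = Nat.card (AddSubgroup.zmultiples x₀) := (Nat.card_zmultiples x₀).symm
  _ ≤ _ := Nat.card_le_card_of_injective _ hinj


/-- A retraction onto a subgroup gives a complement. -/
lemma isCompl_of_retraction {A : Type*} [AddCommGroup A] (K : AddSubgroup A)
    (e : A →+ A) (h1 : ∀ g, e g ∈ K) (h2 : ∀ k ∈ K, e k = k) :
    IsCompl K e.ker := by
  constructor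
  · rw [disjoint_iff_inf_le]
    rintro x ⟨hxK, hxker⟩
    have : e x = x := h2 x hxK
    have hx0 : e x = 0 := hxker
    simpa [hx0] using this.symm
  · rw [codisjoint_iff_le_sup]
    intro g _
    have : g = (e g) + (g - e g) := by abel
    rw [this]
    refine AddSubgroup.add_mem_sup (h1 g) ?_
    show e (g - e g) = 0
    rw [map_sub, h2 (e g) (h1 g), sub_self]

lemma zmod_hom_eq_id {m : ℕ} (φ : ZMod m →+ ZMod m) (h : φ 1 = 1) (z : ZMod m) :
    φ z = z := by
  obtain ⟨k, rfl⟩ := ZMod.intCast_surjective z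
  calc φ (k : ZMod m) = φ (k • (1 : ZMod m)) := by rw [zsmul_eq_mul, mul_one]
  _ = k • φ 1 := map_zsmul φ k 1
  _ = k • (1 : ZMod m) := by rw [h]
  _ = (k : ZMod m) := by rw [zsmul_eq_mul, mul_one]

lemma final_package {G : Type*} [AddCommGroup G] (H : AddSubgroup G) (m : ℕ)
    (y : G) (hyH : y ∈ H) (hym : (m : ℤ) • y = 0) (f : G →+ ZMod m) (hfy : f y = 1) :
    ∃ K : AddSubgroup G, K ≤ H ∧
      Nonempty (K ≃+ ZMod m) ∧
      (∃ L : AddSubgroup H, IsCompl (K.addSubgroupOf H) L) ∧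
      (∃ L : AddSubgroup G, IsCompl K L) := by
  set ι : ZMod m →+ G := ZMod.lift m ⟨zmultiplesHom G y, by simpa using hym⟩ with hιdef
  have hι : ∀ k : ℤ, ι ((k : ℤ) : ZMod m) = k • y := fun k => ZMod.lift_coe m _ k
  have hι1 : ι 1 = y := by
    have := hι 1
    rw [Int.cast_one, one_zsmul] at this
    exact this
  have hfι : ∀ z : ZMod m, f (ι z) = z := by
    intro z
    exact zmod_hom_eq_id (f.comp ι) (by simp [hι1, hfy]) z
  set K := AddSubgroup.zmultiples y with hK
  set e : G →+ G := ι.comp f with he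
  have hmemK : ∀ z : ZMod m, ι z ∈ K := by
    intro z
    obtain ⟨k, rfl⟩ := ZMod.intCast_surjective z
    rw [hι k]
    exact AddSubgroup.zsmul_mem _ (AddSubgroup.mem_zmultiples y) k
  have h1 : ∀ g, e g ∈ K := fun g => hmemK (f g)
  have h2 : ∀ k ∈ K, e k = k := by
    intro k hk
    obtain ⟨j, rfl⟩ := AddSubgroup.mem_zmultiples_iff.mp hk
    show ι (f (j • y)) = j • y
    rw [map_zsmul, hfy, ← hι j]
    congr 1
    rw [zsmul_eq_mul, mul_one]
  have hKH : K ≤ H := by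
    intro k hk
    obtain ⟨j, rfl⟩ := AddSubgroup.mem_zmultiples_iff.mp hk
    exact AddSubgroup.zsmul_mem H hyH j  -- check arg order
  refine ⟨K, hKH, ?_, ?_, ⟨e.ker, isCompl_of_retraction K e h1 h2⟩⟩
  · refine ⟨AddEquiv.symm ⟨⟨fun z => ⟨ι z, hmemK z⟩, fun k => f k.1, ?_, ?_⟩, ?_⟩⟩
    · intro z; exact hfι z
    · intro k; exact Subtype.ext (h2 k.1 k.2)
    · intro a b; exact Subtype.ext (map_add ι a b)
  · set e' : H →+ H :=
      { toFun := fun h => ⟨e h.1, hKH (h1 h.1)⟩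
        map_zero' := by ext; simp
        map_add' := by intro a b; ext; simp } with he'
    refine ⟨e'.ker, isCompl_of_retraction (K.addSubgroupOf H) e' ?_ ?_⟩
    · intro g
      exact AddSubgroup.mem_addSubgroupOf.mpr (h1 g.1)
    · intro k hk
      exact Subtype.ext (h2 k.1 (AddSubgroup.mem_addSubgroupOf.mp hk))


lemma card_smul_pred_congr {A B : Type*} [AddCommGroup A] [AddCommGroup B]
    (φ : A ≃+ B) (c d : ℕ) :
    Nat.card {x : A // c • x = 0 ∧ ∃ u : A, d • u = x} =
      Nat.card {x : B // c • x = 0 ∧ ∃ u : B, d • u = x} := by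
  apply Nat.card_congr
  refine Equiv.subtypeEquiv φ.toEquiv (fun s => ?_)
  show _ ↔ (c • φ s = 0 ∧ ∃ u : B, d • u = φ s)
  constructor
  · rintro ⟨h1, u, h2⟩
    refine ⟨?_, φ u, ?_⟩
    · rw [← map_nsmul, h1, map_zero]
    · rw [← map_nsmul, h2]
  · rintro ⟨h1, u, h2⟩
    refine ⟨?_, φ.symm u, ?_⟩
    · apply φ.injective
      rw [map_nsmul, map_zero]
      exact h1
    · apply φ.injective
      rw [map_nsmul]
      simpa using h2
lemma card_smul_pred_pi {ι : Type*} [Fintype ι] (M : ι → Type*)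
    [∀ i, AddCommGroup (M i)] (c d : ℕ) :
    Nat.card {w : ∀ i, M i // c • w = 0 ∧ ∃ u : ∀ i, M i, d • u = w} =
      ∏ i, Nat.card {x : M i // c • x = 0 ∧ ∃ u : M i, d • u = x} := by
  have e1 : {w : ∀ i, M i // c • w = 0 ∧ ∃ u : ∀ i, M i, d • u = w} ≃
      {w : ∀ i, M i // ∀ i, c • w i = 0 ∧ ∃ u : M i, d • u = w i} := by
    refine Equiv.subtypeEquiv (Equiv.refl _) (fun w => ?_)
    constructor
    · rintro ⟨h1, u, h2⟩ i
      exact ⟨congrFun h1 i, u i, congrFun h2 i⟩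
    · intro h
      exact ⟨funext fun i => (h i).1, fun i => Classical.choose (h i).2,
        funext fun i => Classical.choose_spec (h i).2⟩
  rw [Nat.card_congr e1, Nat.card_congr (Equiv.subtypePiEquivPi (p := fun i (x : M i) => c • x = 0 ∧ ∃ u : M i, d • u = x)), Nat.card_pi]

lemma filter_val_lt_card_lt {n m k : ℕ} (h : n = m) (hk : k < n) :
    (Finset.univ.filter (fun i : Fin m => k < i.val)).card <
      (Finset.univ.filter (fun i : Fin n => k ≤ i.val)).card := by
  subst h
  apply Finset.card_lt_card
  rw [Finset.ssubset_iff_of_subset]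
  · exact ⟨⟨k, hk⟩, by simp⟩
  · intro i hi
    simp only [Finset.mem_filter, Finset.mem_univ, true_and] at hi ⊢
    omega

lemma prod_ite_pow {ι : Type*} [Fintype ι] (P : ι → Prop) [DecidablePred P] (p : ℕ) :
    ∏ i, (if P i then p else 1) = p ^ (Finset.univ.filter P).card := by
  rw [Finset.prod_ite, Finset.prod_const, Finset.prod_const_one, mul_one]

lemma smul_eq_zero_of_coprime {A : Type*} [AddCommGroup A] {c d : ℕ}
    (h : Nat.Coprime c d) {v : A} (h1 : c • v = 0) (h2 : d • v = 0) : v = 0 := by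
  obtain ⟨x, y, hxy⟩ := Nat.isCoprime_iff_coprime.mpr h
  calc v = (1 : ℤ) • v := (one_zsmul v).symm
  _ = (x * c + y * d) • v := by rw [hxy]
  _ = x • ((c:ℤ) • v) + y • ((d:ℤ) • v) := by rw [add_zsmul, mul_zsmul, mul_zsmul]
  _ = 0 := by rw [natCast_zsmul, natCast_zsmul, h1, h2, smul_zero, smul_zero, add_zero]


section
variable {G : Type*} [AddCommGroup G] [Fintype G]

lemma exists_local (H : AddSubgroup G)
    (lG lH : List ℕ) (hlen : lH.length = lG.length)
    (hG1 : ∀ n ∈ lG, 1 < n) (hH1 : ∀ n ∈ lH, 1 ≤ n)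
    (hGc : lG.Chain' (· ∣ ·)) (hHc : lH.Chain' (· ∣ ·))
    (π : G ≃+ ((i : Fin lG.length) → ZMod (lG.get i)))
    (ρ : H ≃+ ((i : Fin lH.length) → ZMod (lH.get i)))
    (t : Fin lG.length) (ht : lH.get (Fin.cast hlen.symm t) = lG.get t)
    (p : ℕ) (hp : p.Prime) (hpm : p ∣ lG.get t) :
    ∃ y ∈ H, p ^ ((lG.get t).factorization p) • y = 0 ∧
      ∃ f : G →+ ZMod (p ^ ((lG.get t).factorization p)), f y = 1 := by
  have hm1 : 1 < lG.get t := hG1 _ (list_get_mem' lG t)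
  have hm0 : lG.get t ≠ 0 := by omega
  set a := (lG.get t).factorization p with hadef
  have ha1 : 0 < a := hp.factorization_pos_of_dvd hm0 hpm
  -- counting, A side
  have hcardA : p ^ (Finset.univ.filter (fun i : Fin lH.length => t.val ≤ i.val)).card ≤
      Nat.card {x : H // p • x = 0 ∧ ∃ u : H, p ^ (a-1) • u = x} := by
    rw [card_smul_pred_congr ρ, card_smul_pred_pi, ← prod_ite_pow]
    apply Finset.prod_le_prod
    · intro i _; positivity
    · intro i _
      haveI : NeZero (lH.get i) := ⟨by have := hH1 _ (list_get_mem' lH i); omega⟩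
      by_cases hti : t.val ≤ i.val
      · rw [if_pos hti]
        apply card_torsion_smul_ge (NeZero.ne _) hp ha1
        calc p ^ a ∣ lG.get t := Nat.ordProj_dvd _ p
        _ = lH.get (Fin.cast hlen.symm t) := ht.symm
        _ ∣ lH.get i := chain'_dvd_get hHc (by simpa [Fin.le_def] using hti)
      · rw [if_neg hti]
        have : Nonempty {x : ZMod (lH.get i) // p • x = 0 ∧
            ∃ u : ZMod (lH.get i), p ^ (a-1) • u = x} :=
          ⟨⟨0, smul_zero _, 0, smul_zero _⟩⟩
        exact Nat.card_pos
  -- counting, B side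
  have hcardB : Nat.card {x : G // p • x = 0 ∧ ∃ u : G, p ^ a • u = x} ≤
      p ^ (Finset.univ.filter (fun i : Fin lG.length => t.val < i.val)).card := by
    rw [card_smul_pred_congr π, card_smul_pred_pi, ← prod_ite_pow]
    apply Finset.prod_le_prod
    · intro i _; positivity
    · intro i _
      haveI : NeZero (lG.get i) := ⟨by have := hG1 _ (list_get_mem' lG i); omega⟩
      by_cases hti : t.val < i.val
      · rw [if_pos hti]
        have hinj2 : Function.Injective (fun x : {x : ZMod (lG.get i) // p • x = 0 ∧
            ∃ u : ZMod (lG.get i), p ^ a • u = x} =>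
            (⟨x.1, x.2.1⟩ : {x : ZMod (lG.get i) // p • x = 0})) := by
          rintro x y hxy
          have h2 := Subtype.ext_iff.mp hxy
          exact Subtype.ext h2
        calc Nat.card {x : ZMod (lG.get i) // p • x = 0 ∧
              ∃ u : ZMod (lG.get i), p ^ a • u = x}
            ≤ Nat.card {x : ZMod (lG.get i) // p • x = 0} :=
              Nat.card_le_card_of_injective _ hinj2
        _ ≤ p := card_torsion_le (NeZero.ne _) hp.pos
      · rw [if_neg hti]
        have hβ : (lG.get i).factorization p ≤ a := by
          apply (hp.pow_dvd_iff_le_factorization hm0).mp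
          calc p ^ ((lG.get i).factorization p) ∣ lG.get i := Nat.ordProj_dvd _ p
          _ ∣ lG.get t := chain'_dvd_get hGc (by rw [Fin.le_def]; omega)
        have hzero : ∀ x : {x : ZMod (lG.get i) // p • x = 0 ∧
            ∃ u : ZMod (lG.get i), p ^ a • u = x}, x.1 = 0 := fun x =>
          torsion_smul_eq_zero (NeZero.ne _) hp hβ x.1 x.2.1 x.2.2
        calc Nat.card {x : ZMod (lG.get i) // p • x = 0 ∧
              ∃ u : ZMod (lG.get i), p ^ a • u = x}
            ≤ Nat.card (Fin 1) := Nat.card_le_card_of_injective (fun _ => 0)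
              (fun x y _ => Subtype.ext (by rw [hzero x, hzero y]))
        _ = 1 := by simp
  have hlt : Nat.card {x : G // p • x = 0 ∧ ∃ u : G, p ^ a • u = x} <
      Nat.card {x : H // p • x = 0 ∧ ∃ u : H, p ^ (a-1) • u = x} := by
    calc Nat.card {x : G // p • x = 0 ∧ ∃ u : G, p ^ a • u = x}
        ≤ p ^ (Finset.univ.filter (fun i : Fin lG.length => t.val < i.val)).card := hcardB
    _ < p ^ (Finset.univ.filter (fun i : Fin lH.length => t.val ≤ i.val)).card :=
        Nat.pow_lt_pow_right hp.one_lt (filter_val_lt_card_lt hlen (by have := t.isLt; omega))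
    _ ≤ _ := hcardA
  -- find the witness s
  have hex : ∃ s : {x : H // p • x = 0 ∧ ∃ u : H, p ^ (a-1) • u = x},
      ¬ ∃ u : G, p ^ a • u = ((s.1 : H) : G) := by
    by_contra hc
    push_neg at hc
    have hinj : Function.Injective (fun s : {x : H // p • x = 0 ∧ ∃ u : H, p ^ (a-1) • u = x} =>
        (⟨((s.1 : H) : G), by
            constructor
            · have := congrArg (H.subtype) s.2.1
              rwa [map_nsmul, map_zero] at this
            · exact hc s⟩ : {x : G // p • x = 0 ∧ ∃ u : G, p ^ a • u = x})) := by
      rintro s1 s2 h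
      have h2 := Subtype.ext_iff.mp h
      exact Subtype.ext (Subtype.ext h2)
    exact absurd (Nat.card_le_card_of_injective _ hinj) (not_le.mpr hlt)
  obtain ⟨⟨s, hs1, h, hh⟩, hs2⟩ := hex
  have hps : p • (s : G) = 0 := by
    have := congrArg (H.subtype) hs1
    rwa [map_nsmul, map_zero] at this
  have e1 : p ^ (a-1) • (h : G) = (s : G) := by
    have := congrArg (H.subtype) hh
    rwa [map_nsmul] at this
  have hpa : p ^ (a-1) * p = p ^ a := by
    rw [← pow_succ]; congr 1; omega
  have hy1 : p ^ a • (h : G) = 0 := by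
    calc p ^ a • (h : G) = (p ^ (a-1) * p) • (h : G) := by rw [hpa]
    _ = p • (p ^ (a-1) • (h : G)) := mul_nsmul _ _ _
    _ = p • (s : G) := by rw [e1]
    _ = 0 := hps
  set w := π (h : G) with hw
  set v := π (s : G) with hv
  have hv1 : p • v = 0 := by rw [hv, ← map_nsmul, hps, map_zero]
  have hwv : p ^ (a-1) • w = v := by rw [hw, hv, ← map_nsmul, e1]
  have hfail : ∃ i, ¬ ∃ x : ZMod (lG.get i), p ^ a • x = v i := by
    by_contra hc
    push_neg at hc
    choose u hu using hc
    apply hs2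
    refine ⟨π.symm u, π.injective ?_⟩
    rw [map_nsmul, AddEquiv.apply_symm_apply]
    funext i
    exact hu i
  obtain ⟨i, hi⟩ := hfail
  haveI : NeZero (lG.get i) := ⟨by have := hG1 _ (list_get_mem' lG i); omega⟩
  have hx1 : p • v i = 0 := congrFun hv1 i
  have hx2 : p ^ (a-1) • (w i) = v i := congrFun hwv i
  have hβ : a ≤ (lG.get i).factorization p := by
    by_contra hc
    push_neg at hc
    have hz : v i = 0 :=
      torsion_smul_eq_zero (NeZero.ne _) hp (by omega) (v i) hx1 ⟨w i, hx2⟩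
    exact hi ⟨0, by rw [smul_zero, hz]⟩
  have hpd : ¬ p ∣ (w i).val := by
    intro hdvd
    obtain ⟨k, hk⟩ := hdvd
    apply hi
    refine ⟨((k : ℕ) : ZMod (lG.get i)), ?_⟩
    have hwik : w i = p • ((k : ℕ) : ZMod (lG.get i)) := by
      rw [nsmul_eq_mul, ← Nat.cast_mul, ← hk, ZMod.natCast_val, ZMod.cast_id]
    rw [← hx2, hwik, ← mul_nsmul, mul_comm, hpa]
  haveI : NeZero (p ^ ((lG.get i).factorization p)) := ⟨(pow_pos hp.pos _).ne'⟩
  have hcop : ((w i).val).Coprime (p ^ ((lG.get i).factorization p)) :=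
    Nat.Coprime.pow_right _ ((hp.coprime_iff_not_dvd.mpr hpd).symm)
  have hu : IsUnit (((w i).val : ℕ) : ZMod (p ^ ((lG.get i).factorization p))) :=
    (ZMod.isUnit_iff_coprime _ _).mpr hcop
  have hd1 : p ^ ((lG.get i).factorization p) ∣ lG.get i := Nat.ordProj_dvd _ p
  have hd2 : p ^ a ∣ p ^ ((lG.get i).factorization p) := pow_dvd_pow p hβ
  set g3 := (ZMod.castHom hd1 (ZMod (p ^ ((lG.get i).factorization p)))).toAddMonoidHom with hg3
  set g4 := AddMonoidHom.mulLeft ((hu.unit⁻¹ : _) : ZMod (p ^ ((lG.get i).factorization p))) with hg4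
  set g5 := (ZMod.castHom hd2 (ZMod (p ^ a))).toAddMonoidHom with hg5
  refine ⟨(h : G), h.2, hy1, g5.comp (g4.comp (g3.comp
    ((Pi.evalAddMonoidHom (fun j => ZMod (lG.get j)) i).comp π.toAddMonoidHom))), ?_⟩
  show g5 (g4 (g3 ((π (h : G)) i))) = 1
  rw [← hw]
  have e3 : g3 (w i) = (((w i).val : ℕ) : ZMod (p ^ ((lG.get i).factorization p))) := by
    rw [hg3]
    show (ZMod.castHom hd1 _) (w i) = _
    rw [ZMod.castHom_apply, ← ZMod.natCast_val]
  have e4 : g4 (g3 (w i)) = 1 := by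
    rw [e3, hg4]
    simp only [AddMonoidHom.coe_mulLeft]
    exact hu.val_inv_mul
  rw [e4, hg5]
  show (ZMod.castHom hd2 (ZMod (p ^ a))) 1 = 1
  exact map_one _
end


/-- `l` is the list of invariant factors of the finite abelian group `G`
(possibly padded with leading `1`'s). -/
def IsInvFactorDecomp (G : Type*) [AddCommGroup G] (l : List ℕ) : Prop :=
  (∀ n ∈ l, 1 ≤ n) ∧ l.Chain' (· ∣ ·) ∧
    Nonempty (G ≃+ ((i : Fin l.length) → ZMod (l.get i)))

theorem stmt4 (G : Type*) [AddCommGroup G] [Fintype G] (H : AddSubgroup G)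
    (lG lH : List ℕ) (hlen : lH.length = lG.length)
    (hG : IsInvFactorDecomp G lG) (hG1 : ∀ n ∈ lG, 1 < n)
    (hH : IsInvFactorDecomp H lH)
    (t : Fin lG.length) (ht : lH.get (Fin.cast hlen.symm t) = lG.get t) :
    ∃ K : AddSubgroup G, K ≤ H ∧
      Nonempty (K ≃+ ZMod (lG.get t)) ∧
      (∃ L : AddSubgroup H, IsCompl (K.addSubgroupOf H) L) ∧
      (∃ L : AddSubgroup G, IsCompl K L) := by
  obtain ⟨-, hGc, ⟨π⟩⟩ := hG
  obtain ⟨hH1, hHc, ⟨ρ⟩⟩ := hH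
  set m := lG.get t with hm
  have hm1 : 1 < m := hG1 _ (list_get_mem' lG t)
  have hm0 : m ≠ 0 := by omega
  haveI : NeZero m := ⟨hm0⟩
  have hloc : ∀ p ∈ m.primeFactors, ∃ y, y ∈ H ∧ p ^ (m.factorization p) • y = 0 ∧
      ∃ f : G →+ ZMod (p ^ (m.factorization p)), f y = 1 := by
    intro p hp
    obtain ⟨hp1, hp2, -⟩ := Nat.mem_primeFactors.mp hp
    exact exists_local H lG lH hlen hG1 hH1 hGc hHc π ρ t ht p hp1 hp2
  choose! y hyH hy0 f hf using hloc
  set Y := ∑ p ∈ m.primeFactors, y p with hY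
  have hYH : Y ∈ H := AddSubgroup.sum_mem H (fun p hp => hyH p hp)
  have hYm : ∀ p ∈ m.primeFactors, m • y p = 0 := by
    intro p hp
    obtain ⟨c, hc⟩ := Nat.ordProj_dvd m p
    rw [hc, mul_nsmul, hy0 p hp, smul_zero]
  have hmY : (m : ℤ) • Y = 0 := by
    rw [natCast_zsmul, hY, Finset.smul_sum]
    exact Finset.sum_eq_zero fun p hp => hYm p hp
  set g : (p : ℕ) → ZMod (p ^ m.factorization p) →+ ZMod m := fun p =>
    ZMod.lift _ ⟨zmultiplesHom _ (((m / p ^ m.factorization p : ℕ) : ZMod m)), by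
      show ((p ^ m.factorization p : ℕ) : ℤ) • (((m / p ^ m.factorization p : ℕ) : ZMod m)) = 0
      rw [natCast_zsmul, nsmul_eq_mul, ← Nat.cast_mul,
        Nat.mul_div_cancel' (Nat.ordProj_dvd m p), ZMod.natCast_self]⟩ with hg
  have hg1 : ∀ p : ℕ, (g p) 1 = ((m / p ^ m.factorization p : ℕ) : ZMod m) := by
    intro p
    have : (1 : ZMod (p ^ m.factorization p)) = ((1 : ℤ) : ZMod (p ^ m.factorization p)) := by
      rw [Int.cast_one]
    rw [hg, this, ZMod.lift_coe, zmultiplesHom_apply, one_zsmul]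
  have hcross : ∀ p ∈ m.primeFactors, ∀ q ∈ m.primeFactors, q ≠ p → f p (y q) = 0 := by
    intro p hp q hq hqp
    obtain ⟨hp1, -, -⟩ := Nat.mem_primeFactors.mp hp
    obtain ⟨hq1, -, -⟩ := Nat.mem_primeFactors.mp hq
    apply smul_eq_zero_of_coprime
      (Nat.Coprime.pow (m.factorization p) (m.factorization q) ((Nat.coprime_primes hp1 hq1).mpr (Ne.symm hqp)))
    · rw [nsmul_eq_mul, ZMod.natCast_self, zero_mul]
    · rw [← map_nsmul, hy0 q hq, map_zero]
  have hfY : ∀ p ∈ m.primeFactors, f p Y = 1 := by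
    intro p hp
    rw [hY, map_sum, Finset.sum_eq_single p (fun q hq hqp => hcross p hp q hq hqp)
      (fun hnp => absurd hp hnp)]
    exact hf p hp
  set N : ℕ := ∑ p ∈ m.primeFactors, m / p ^ m.factorization p with hN
  set F0 : G →+ ZMod m := ∑ p ∈ m.primeFactors, (g p).comp (f p) with hF0
  have hF0Y : F0 Y = ((N : ℕ) : ZMod m) := by
    rw [hF0, AddMonoidHom.finset_sum_apply, hN, Nat.cast_sum]
    apply Finset.sum_congr rfl
    intro p hp
    rw [AddMonoidHom.comp_apply, hfY p hp, hg1 p]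
  have hcop : N.Coprime m := by
    by_contra hc
    obtain ⟨P, hP, hPN, hPm⟩ := Nat.Prime.not_coprime_iff_dvd.mp hc
    have hPpf : P ∈ m.primeFactors := Nat.mem_primeFactors.mpr ⟨hP, hPm, hm0⟩
    have haP : 0 < m.factorization P := hP.factorization_pos_of_dvd hm0 hPm
    have hrest : P ∣ ∑ q ∈ m.primeFactors.erase P, m / q ^ m.factorization q := by
      apply Finset.dvd_sum
      intro q hq
      have hqP : q ≠ P := Finset.ne_of_mem_erase hq
      have h1 : P ^ (m.factorization P) ∣ m / q ^ m.factorization q := by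
        have h2 := Nat.ordProj_dvd (m / q ^ m.factorization q) P
        rwa [Nat.factorization_ordCompl m q, Finsupp.erase_ne (Ne.symm hqP)] at h2
      exact dvd_trans (dvd_pow_self P haP.ne') h1
    have hterm : P ∣ m / P ^ m.factorization P := by
      have h3 := Nat.dvd_sub hPN hrest
      rw [hN] at h3
      rwa [← Finset.add_sum_erase _ _ hPpf, Nat.add_sub_cancel] at h3
    exact Nat.not_dvd_ordCompl hP hm0 hterm
  have hu : IsUnit ((N : ℕ) : ZMod m) := (ZMod.isUnit_iff_coprime N m).mpr hcop
  set F : G →+ ZMod m := (AddMonoidHom.mulLeft ((hu.unit⁻¹ : (ZMod m)ˣ) : ZMod m)).comp F0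
    with hF
  have hFY : F Y = 1 := by
    rw [hF, AddMonoidHom.comp_apply, hF0Y]
    simp only [AddMonoidHom.coe_mulLeft]
    exact hu.val_inv_mul
  exact final_package H m Y hYH hmY F hFY
end

section
/- Let p be a prime with p ≡ -1 (mod 4), let G = Z/pZ, n = (p-1)/2, and let W be the integer sequence consisting of (n-1)/2 copies of 1, (n-1)/2 copies of -1, and one 0. Let S be the sequence over G consisting of n copies each of 0, 1, and 2. Then the set of weighted n-term subsequence sums Σ_{|W|}(W,S) equals G \ {(p+1)/2, (p-1)/2}; in particular, it contains no nontrivial subgroup of G. -/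
/-- The set of weighted `n`-term subsequence sums `Σ_n(W,S)`: all sums
`Σ wᵢ • s_{τ(i)}` over `n`-term subsequences of `W` and of `S`, arbitrarily paired. -/
def wsums (G : Type*) [AddCommGroup G] (n : ℕ) (W : Multiset ℤ) (S : Multiset G) :
    Set G :=
  { g | ∃ (w : List ℤ) (s : List G), w.length = n ∧ s.length = n ∧
      (w : Multiset ℤ) ≤ W ∧ (s : Multiset G) ≤ S ∧
      g = ((w.zip s).map fun p => p.1 • p.2).sum }

private lemma aux_zipsum {G : Type*} [AddCommGroup G] (c : ℤ) (l : List G) (k : ℕ)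
    (hk : l.length = k) :
    (((List.replicate k c).zip l).map fun q => q.1 • q.2).sum = c • l.sum := by
  subst hk
  induction l with
  | nil => simp
  | cons x t ih => simp [List.replicate_succ, smul_add, ih]

private lemma aux_exists_list (m A : ℕ) (h : A ≤ 2 * m) :
    ∃ l : List ℤ, l.length = m ∧ (∀ x ∈ l, x = 0 ∨ x = 1 ∨ x = 2) ∧ l.sum = A := by
  induction m generalizing A with
  | zero =>
    have : A = 0 := by omega
    exact ⟨[], rfl, by simp, by simp [this]⟩
  | succ m ih =>
    obtain ⟨l, h1, h2, h3⟩ := ih (A - min A 2) (by omega)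
    refine ⟨((min A 2 : ℕ) : ℤ) :: l, by simp [h1], ?_, ?_⟩
    · intro x hx
      rcases List.mem_cons.mp hx with rfl | hx
      · have : min A 2 = 0 ∨ min A 2 = 1 ∨ min A 2 = 2 := by omega
        rcases this with h | h | h <;> simp [h]
      · exact h2 x hx
    · simp only [List.sum_cons, h3]
      push_cast
      omega

private lemma aux_nonneg (f : ℤ → ℕ) (w : List ℤ) :
    0 ≤ (w.map fun a => ((f a : ℕ) : ℤ)).sum :=
  List.sum_nonneg fun x hx => by
    obtain ⟨a, -, rfl⟩ := List.mem_map.mp hx; positivity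

private lemma aux_bound (p : ℕ) (w : List ℤ) (s : List (ZMod p))
    (hs : ∀ x ∈ s, x = 0 ∨ x = 1 ∨ x = 2) :
    ∃ t : ℤ, ((w.zip s).map fun q => q.1 • q.2).sum = (t : ZMod p) ∧
      -(2 * ((w.map fun a => ((-a).toNat : ℤ)).sum)) ≤ t ∧
      t ≤ 2 * ((w.map fun a => (a.toNat : ℤ)).sum) := by
  induction w generalizing s with
  | nil => exact ⟨0, by simp, by simp, by simp⟩
  | cons a w ih =>
    cases s with
    | nil =>
      refine ⟨0, by simp, ?_, ?_⟩
      · have := aux_nonneg (fun a => (-a).toNat) w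
        simp only [List.map_cons, List.sum_cons]
        omega
      · have := aux_nonneg (fun a => a.toNat) w
        simp only [List.map_cons, List.sum_cons]
        omega
    | cons x s =>
      obtain ⟨t, ht, hlo, hhi⟩ := ih s (fun y hy => hs y (List.mem_cons_of_mem _ hy))
      rcases hs x List.mem_cons_self with rfl | rfl | rfl
      · refine ⟨t, by rw [List.zip_cons_cons, List.map_cons, List.sum_cons, ht, smul_zero,
            zero_add], ?_, ?_⟩ <;>
          simp only [List.map_cons, List.sum_cons] <;> omega
      · refine ⟨a + t, ?_, ?_, ?_⟩
        · rw [List.zip_cons_cons, List.map_cons, List.sum_cons, ht, zsmul_eq_mul, mul_one]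
          push_cast; ring
        · simp only [List.map_cons, List.sum_cons]; omega
        · simp only [List.map_cons, List.sum_cons]; omega
      · refine ⟨2 * a + t, ?_, ?_, ?_⟩
        · rw [List.zip_cons_cons, List.map_cons, List.sum_cons, ht, zsmul_eq_mul]
          push_cast; ring
        · simp only [List.map_cons, List.sum_cons]; omega
        · simp only [List.map_cons, List.sum_cons]; omega

theorem stmt5 (p : ℕ) (hp : p.Prime) (hp4 : p % 4 = 3)
    (n : ℕ) (hn : n = (p - 1) / 2)
    (W : Multiset ℤ)
    (hW : W = Multiset.replicate ((n - 1) / 2) 1 +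
        Multiset.replicate ((n - 1) / 2) (-1) + {0})
    (S : Multiset (ZMod p))
    (hS : S = Multiset.replicate n (0 : ZMod p) + Multiset.replicate n 1 +
        Multiset.replicate n 2) :
    wsums (ZMod p) (Multiset.card W) W S =
      {x : ZMod p | x ≠ (((p + 1) / 2 : ℕ) : ZMod p) ∧
        x ≠ (((p - 1) / 2 : ℕ) : ZMod p)} ∧
    ∀ K : AddSubgroup (ZMod p),
      (K : Set (ZMod p)) ⊆ wsums (ZMod p) (Multiset.card W) W S → K = ⊥ := by
  haveI : Fact p.Prime := ⟨hp⟩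
  have hp2 : 2 ≤ p := hp.two_le
  have hp3 : 3 ≤ p := by omega
  set m := (n - 1) / 2 with hm
  have hp2n : p = 2 * n + 1 := by omega
  have hnm : n = 2 * m + 1 := by omega
  have hn1 : 1 ≤ n := by omega
  have hcardW : Multiset.card W = n := by
    rw [hW]; simp; omega
  -- distinctness of 0, 1, 2 in ZMod p
  have h10 : (1 : ZMod p) ≠ 0 := one_ne_zero
  have h20 : (2 : ZMod p) ≠ 0 := by
    have : ((2 : ℕ) : ZMod p) ≠ 0 := by
      rw [Ne, ZMod.natCast_eq_zero_iff]
      intro h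
      have := Nat.le_of_dvd (by norm_num) h
      omega
    simpa using this
  have h21 : (2 : ZMod p) ≠ 1 := by
    intro h
    apply h10
    linear_combination h
  have hSmem : ∀ x : ZMod p, x ∈ S ↔ (x = 0 ∨ x = 1 ∨ x = 2) := by
    intro x
    rw [hS]
    simp [Multiset.mem_replicate, show n ≠ 0 by omega, or_assoc]
  have hcountS : ∀ x : ZMod p, x = 0 ∨ x = 1 ∨ x = 2 → n ≤ Multiset.count x S := by
    intro x hx
    rw [hS]
    rcases hx with rfl | rfl | rfl <;>
      simp [Multiset.count_replicate, h10, h20, h21, Ne.symm h10, Ne.symm h20, Ne.symm h21]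
  have hmain : wsums (ZMod p) (Multiset.card W) W S =
      {x : ZMod p | x ≠ (((p + 1) / 2 : ℕ) : ZMod p) ∧
        x ≠ (((p - 1) / 2 : ℕ) : ZMod p)} := by
    ext x
    simp only [hcardW, wsums, Set.mem_setOf_eq]
    constructor
    · rintro ⟨w, s, hwl, hsl, hwle, hsle, rfl⟩
      have hwW : (w : Multiset ℤ) = W :=
        Multiset.eq_of_le_of_card_le hwle (by simpa [hwl] using hcardW.le)
      have hsmem : ∀ y ∈ s, y = 0 ∨ y = 1 ∨ y = 2 := fun y hy =>
        (hSmem y).mp (Multiset.mem_of_le hsle (Multiset.mem_coe.mpr hy))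
      obtain ⟨t, ht, hlo, hhi⟩ := aux_bound p w s hsmem
      have hmap1 : (w.map fun a => (a.toNat : ℤ)).sum = m := by
        have h := congrArg (fun M : Multiset ℤ => (M.map fun a => (a.toNat : ℤ)).sum) hwW
        simpa [hW, Multiset.map_replicate, Multiset.sum_replicate] using h
      have hmap2 : (w.map fun a => ((-a).toNat : ℤ)).sum = m := by
        have h := congrArg (fun M : Multiset ℤ => (M.map fun a => ((-a).toNat : ℤ)).sum) hwW
        simpa [hW, Multiset.map_replicate, Multiset.sum_replicate] using h
      rw [hmap1] at hhi
      rw [hmap2] at hlo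
      rw [ht]
      constructor
      · intro hEq
        rw [show ((p + 1) / 2 : ℕ) = n + 1 by omega] at hEq
        have hz : ((t - (n + 1) : ℤ) : ZMod p) = 0 := by
          push_cast
          rw [hEq]
          push_cast
          ring
        have hd := (ZMod.intCast_zmod_eq_zero_iff_dvd _ p).mp hz
        have hle := Int.le_of_dvd (b := -(t - (n + 1))) (by omega) (dvd_neg.mpr hd)
        omega
      · intro hEq
        rw [show ((p - 1) / 2 : ℕ) = n by omega] at hEq
        have hz : ((t - n : ℤ) : ZMod p) = 0 := by
          push_cast
          rw [hEq]
          ring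
        have hd := (ZMod.intCast_zmod_eq_zero_iff_dvd _ p).mp hz
        have hle := Int.le_of_dvd (b := -(t - n)) (by omega) (dvd_neg.mpr hd)
        omega
    · rintro ⟨hx1, hx2⟩
      have hxval : ((x.val : ℕ) : ZMod p) = x := ZMod.natCast_rightInverse x
      have hvlt : x.val < p := ZMod.val_lt x
      have hvn : x.val ≠ n := by
        intro h
        apply hx2
        rw [show ((p - 1) / 2 : ℕ) = n by omega, ← h, hxval]
      have hvn1 : x.val ≠ n + 1 := by
        intro h
        apply hx1
        rw [show ((p + 1) / 2 : ℕ) = n + 1 by omega, ← h, hxval]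
      set t : ℤ := if x.val ≤ n - 1 then (x.val : ℤ) else (x.val : ℤ) - p with htdef
      have hcast : (t : ZMod p) = x := by
        rw [htdef]
        split
        · exact_mod_cast hxval
        · push_cast
          simp [ZMod.natCast_self, hxval]
      have htlo : -(n : ℤ) + 1 ≤ t := by rw [htdef]; split <;> omega
      have hthi : t ≤ (n : ℤ) - 1 := by rw [htdef]; split <;> omega
      obtain ⟨la, hla1, hla2, hla3⟩ := aux_exists_list m t.toNat (by omega)
      obtain ⟨lb, hlb1, hlb2, hlb3⟩ := aux_exists_list m (-t).toNat (by omega)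
      refine ⟨List.replicate m 1 ++ List.replicate m (-1) ++ [0],
        (la.map fun v : ℤ => (v : ZMod p)) ++ (lb.map fun v : ℤ => (v : ZMod p)) ++ [0],
        ?_, ?_, ?_, ?_, ?_⟩
      · simp; omega
      · simp [hla1, hlb1]; omega
      · rw [hW]
        apply le_of_eq
        simp only [← Multiset.coe_add, Multiset.coe_replicate, Multiset.coe_singleton]
      · rw [Multiset.le_iff_count]
        intro a
        by_cases ha : a = 0 ∨ a = 1 ∨ a = 2
        · calc Multiset.count a _ ≤ _ := Multiset.count_le_card a _
            _ ≤ Multiset.count a S := by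
              refine le_trans ?_ (hcountS a ha)
              simp [hla1, hlb1]
              omega
        · rw [Multiset.count_eq_zero.mpr]
          · exact Nat.zero_le _
          intro hmem
          apply ha
          rw [Multiset.mem_coe] at hmem
          simp only [List.mem_append, List.mem_map, List.mem_singleton] at hmem
          rcases hmem with (⟨v, hv, rfl⟩ | ⟨v, hv, rfl⟩) | rfl
          · rcases hla2 v hv with rfl | rfl | rfl <;> norm_num
          · rcases hlb2 v hv with rfl | rfl | rfl <;> norm_num
          · left; rfl
      · have hsum : (((List.replicate m (1:ℤ) ++ List.replicate m (-1) ++ [0]).zip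
            ((la.map fun v : ℤ => (v : ZMod p)) ++ (lb.map fun v : ℤ => (v : ZMod p)) ++
              [0])).map fun q : ℤ × ZMod p => q.1 • q.2).sum = (t : ZMod p) := by
          rw [List.zip_append (by simp [hla1, hlb1]), List.zip_append (by simp [hla1]),
            List.map_append, List.map_append, List.sum_append, List.sum_append,
            aux_zipsum 1 _ m (by simp [hla1]), aux_zipsum (-1) _ m (by simp [hlb1]),
            one_smul, neg_one_smul]
          have h1 : ((la.map fun v : ℤ => (v : ZMod p))).sum = ((t.toNat : ℤ) : ZMod p) := by
            have := (map_list_sum (Int.castRingHom (ZMod p)) la).symm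
            simpa [hla3] using this
          have h2 : ((lb.map fun v : ℤ => (v : ZMod p))).sum = (((-t).toNat : ℤ) : ZMod p) := by
            have := (map_list_sum (Int.castRingHom (ZMod p)) lb).symm
            simpa [hlb3] using this
          rw [h1, h2]
          have ht' : ((t.toNat : ℤ)) - (((-t).toNat : ℤ)) = t := by omega
          have ht2 : ((t.toNat : ℤ) : ZMod p) - (((-t).toNat : ℤ) : ZMod p) = (t : ZMod p) := by
            rw [← Int.cast_sub, ht']
          simp only [List.zip_cons_cons, List.zip_nil_left, List.map_cons, List.map_nil,
            List.sum_cons, List.sum_nil, smul_zero, add_zero]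
          rw [← ht2]
          ring
        rw [hsum]
        exact hcast.symm
  refine ⟨hmain, ?_⟩
  intro K hK
  rw [AddSubgroup.eq_bot_iff_forall]
  intro x hxK
  by_contra hx0
  have h1 : ((((n : ZMod p) * x⁻¹).val) • x : ZMod p) = (n : ZMod p) := by
    rw [nsmul_eq_mul, ZMod.natCast_val, ZMod.cast_id, mul_assoc, inv_mul_cancel₀ hx0, mul_one]
  have hnK : ((n : ℕ) : ZMod p) ∈ K := by
    rw [← h1]
    exact AddSubgroup.nsmul_mem K hxK _
  have hmem := hK hnK
  rw [hmain] at hmem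
  exact hmem.2 (by rw [show ((p - 1) / 2 : ℕ) = n by omega])
end

section
/- Let m = 2^r with r ≥ 1, G = Z/mZ, n = m-1, and let W be the integer sequence consisting of (n-1)/2 copies of 1, (n-1)/2 copies of -1, and one 0. Let S consist of n copies of 0 and n copies of 1. Then Σ_{|W|}(W,S) = G \ {m/2}, and hence Σ_{|W|}(W,S) contains no nontrivial subgroup of G (since every nontrivial subgroup of Z/2^rZ contains the element 2^{r-1}). -/
private lemma zipsum_replicate {G : Type*} [AddCommGroup G] (n : ℕ) (a : ℤ) (g : G) :
    (((List.replicate n a).zip (List.replicate n g)).map fun p => p.1 • p.2).sum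
      = n • (a • g) := by
  induction n with
  | zero => simp
  | succ n ih => simp [List.replicate_succ, ih, succ_nsmul, add_comm]

private lemma cast_zipsum {m : ℕ} (hm : (0:ZMod m) ≠ 1) (w : List ℤ) (s : List (ZMod m))
    (hs : ∀ x ∈ s, x = 0 ∨ x = 1) :
    ((w.zip s).map fun p => p.1 • p.2).sum
      = ((((w.zip (s.map fun x => if x = 1 then (1:ℤ) else 0)).map
          fun p => p.1 * p.2).sum : ℤ) : ZMod m) := by
  induction w generalizing s with
  | nil => simp
  | cons a w ih =>
    cases s with
    | nil => simp
    | cons b s =>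
      have hb := hs b (by simp)
      have ih' := ih s (fun x hx => hs x (by simp [hx]))
      simp only [List.map_cons, List.zip_cons_cons, List.sum_cons, Int.cast_add, ← ih']
      congr 1
      rcases hb with hb | hb <;> subst hb
      · simp [hm]
      · simp [zsmul_eq_mul]

private lemma zipsum_bounds (w e : List ℤ)
    (hw : ∀ x ∈ w, x = 1 ∨ x = -1 ∨ x = 0)
    (he : ∀ x ∈ e, x = 0 ∨ x = 1) :
    -((w.count (-1) : ℤ)) ≤ ((w.zip e).map fun p => p.1 * p.2).sum ∧
      ((w.zip e).map fun p => p.1 * p.2).sum ≤ (w.count 1 : ℤ) := by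
  induction w generalizing e with
  | nil => simp
  | cons a w ih =>
    cases e with
    | nil =>
      simp only [List.zip_nil_right, List.map_nil, List.sum_nil]
      constructor
      · simp only [neg_nonpos]; positivity
      · positivity
    | cons b e =>
      have ha := hw a (by simp)
      have hb := he b (by simp)
      have ih' := ih e (fun x hx => hw x (by simp [hx])) (fun x hx => he x (by simp [hx]))
      simp only [List.zip_cons_cons, List.map_cons, List.sum_cons, List.count_cons]
      rcases ha with ha | ha | ha <;> rcases hb with hb | hb <;> subst ha hb <;>
        simp only [beq_iff_eq] <;> norm_num <;> omega

theorem stmt6 (r : ℕ) (hr : 1 ≤ r)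
    (m n : ℕ) (hm : m = 2 ^ r) (hn : n = m - 1)
    (W : Multiset ℤ)
    (hW : W = Multiset.replicate ((n - 1) / 2) 1 +
        Multiset.replicate ((n - 1) / 2) (-1) + {0})
    (S : Multiset (ZMod m))
    (hS : S = Multiset.replicate n (0 : ZMod m) + Multiset.replicate n 1) :
    wsums (ZMod m) (Multiset.card W) W S =
      {x : ZMod m | x ≠ ((2 ^ (r - 1) : ℕ) : ZMod m)} ∧
    ∀ K : AddSubgroup (ZMod m),
      (K : Set (ZMod m)) ⊆ wsums (ZMod m) (Multiset.card W) W S → K = ⊥ := by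
  -- basic numerology
  set A : ℕ := 2 ^ (r - 1) with hA
  have hA1 : 1 ≤ A := Nat.one_le_two_pow
  have hm2 : m = 2 * A := by
    rw [hm, hA, ← pow_succ']
    congr 1
    omega
  set k : ℕ := A - 1 with hk
  have hnk : n = 2 * k + 1 := by omega
  have hk2 : (n - 1) / 2 = k := by omega
  rw [hk2] at hW
  haveI : NeZero m := ⟨by omega⟩
  haveI : Fact (1 < m) := ⟨by omega⟩
  have h01 : (0 : ZMod m) ≠ 1 := zero_ne_one
  have hcardW : Multiset.card W = n := by
    rw [hW]; simp [hnk]; omega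
  -- the forbidden value
  have hAm : ((A : ℕ) : ZMod m) = ((2 ^ (r-1) : ℕ) : ZMod m) := by rw [hA]
  -- forward inclusion
  have fwd : wsums (ZMod m) (Multiset.card W) W S ⊆
      {x : ZMod m | x ≠ ((2 ^ (r - 1) : ℕ) : ZMod m)} := by
    rintro g ⟨w, s, hwl, hsl, hwW, hsS, rfl⟩
    have hsmem : ∀ x ∈ s, x = 0 ∨ x = 1 := by
      intro x hx
      have : x ∈ S := Multiset.mem_of_le hsS (by exact_mod_cast hx)
      rw [hS] at this
      simp [Multiset.mem_replicate] at this
      tauto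
    have hwmem : ∀ x ∈ w, x = 1 ∨ x = -1 ∨ x = 0 := by
      intro x hx
      have : x ∈ W := Multiset.mem_of_le hwW (by exact_mod_cast hx)
      rw [hW] at this
      simp [Multiset.mem_replicate] at this
      tauto
    set e : List ℤ := s.map fun x => if x = 1 then (1:ℤ) else 0 with he
    have hemem : ∀ x ∈ e, x = 0 ∨ x = 1 := by
      intro x hx
      rw [he] at hx
      simp only [List.mem_map] at hx
      obtain ⟨y, _, rfl⟩ := hx
      split <;> simp
    set t : ℤ := ((w.zip e).map fun p => p.1 * p.2).sum with ht
    have hbounds := zipsum_bounds w e hwmem hemem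
    have hcount1 : w.count 1 ≤ k := by
      have := Multiset.count_le_of_le 1 hwW
      rw [hW] at this
      simpa [Multiset.count_replicate, Multiset.count_singleton] using this
    have hcountm1 : w.count (-1) ≤ k := by
      have := Multiset.count_le_of_le (-1) hwW
      rw [hW] at this
      simpa [Multiset.count_replicate, Multiset.count_singleton] using this
    have hcast : ((w.zip s).map fun p => p.1 • p.2).sum = ((t : ℤ) : ZMod m) :=
      cast_zipsum h01 w s hsmem
    intro hgc
    rw [hcast, ← hAm] at hgc
    have hz : (((t - A : ℤ)) : ZMod m) = 0 := by push_cast; rw [hgc, sub_self]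
    rw [ZMod.intCast_zmod_eq_zero_iff_dvd] at hz
    have habs : |(t - A : ℤ)| < (m : ℤ) := by
      rw [abs_lt]
      constructor <;> push_cast <;> omega
    have := Int.eq_zero_of_abs_lt_dvd hz habs
    omega
  -- the constructive lemma
  have key : ∀ p q : ℕ, p ≤ k → q ≤ k →
      (((p : ℤ) - (q : ℤ) : ℤ) : ZMod m) ∈ wsums (ZMod m) (Multiset.card W) W S := by
    intro p q hp hq
    refine ⟨List.replicate p 1 ++ (List.replicate (k-p) 1 ++ (List.replicate q (-1) ++
        (List.replicate (k-q) (-1) ++ [0]))),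
      List.replicate p (1 : ZMod m) ++ (List.replicate (k-p) 0 ++ (List.replicate q 1 ++
        (List.replicate (k-q) 0 ++ [0]))), ?_, ?_, ?_, ?_, ?_⟩
    · simp [hcardW, hnk]; omega
    · simp [hcardW, hnk]; omega
    · have hrep : ∀ (a : ℤ) (p : ℕ), p ≤ k →
          Multiset.replicate k a = Multiset.replicate p a + Multiset.replicate (k - p) a := by
        intro a p hp
        rw [← Multiset.replicate_add]
        congr 1
        omega
      rw [hW, hrep 1 p hp, hrep (-1) q hq]
      simp [← Multiset.coe_add, Multiset.coe_replicate, add_assoc]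
    · rw [hS, Multiset.le_iff_count]
      intro a
      simp only [← Multiset.coe_add, Multiset.count_add, Multiset.count_replicate,
        Multiset.count_singleton, Multiset.coe_singleton]
      rcases eq_or_ne a 0 with rfl | h0
      · simp [h01]
        omega
      rcases eq_or_ne a 1 with rfl | h1
      · simp [h0]
        omega
      · simp [h0, h1]
    · rw [List.zip_append (by simp), List.zip_append (by simp),
        List.zip_append (by simp), List.zip_append (by simp)]
      simp only [List.map_append, List.sum_append, zipsum_replicate]
      simp [zsmul_eq_mul, nsmul_eq_mul]
      push_cast
      ring
  -- reverse inclusion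
  have bwd : {x : ZMod m | x ≠ ((2 ^ (r - 1) : ℕ) : ZMod m)} ⊆
      wsums (ZMod m) (Multiset.card W) W S := by
    intro x hx
    have hx' : x ≠ ((A : ℕ) : ZMod m) := by rwa [hAm]
    have hvlt : x.val < m := ZMod.val_lt x
    have hxv : ((x.val : ℕ) : ZMod m) = x := ZMod.natCast_rightInverse x
    have hne : x.val ≠ A := by
      intro h
      exact hx' (by rw [← hxv, h])
    rcases le_or_gt x.val k with hv | hv
    · have := key x.val 0 hv (by omega)
      simpa [hxv] using this
    · -- x.val ≥ A + 1 since x.val ≠ A and x.val > k = A - 1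
      have hv' : A + 1 ≤ x.val := by omega
      set q : ℕ := m - x.val with hq
      have hq1 : q ≤ k := by omega
      have := key 0 q (by omega) hq1
      have hxq : (((((0:ℕ)) : ℤ) - (q : ℤ) : ℤ) : ZMod m) = x := by
        have hsum : ((x.val : ℕ) : ZMod m) + ((q : ℕ) : ZMod m) = 0 := by
          rw [← Nat.cast_add]
          have : x.val + q = m := by omega
          rw [this]
          exact ZMod.natCast_self m
        push_cast
        rw [← hxv]
        linear_combination -hsum
      rwa [hxq] at this
  have hset : wsums (ZMod m) (Multiset.card W) W S =
      {x : ZMod m | x ≠ ((2 ^ (r - 1) : ℕ) : ZMod m)} :=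
    le_antisymm fwd bwd
  refine ⟨hset, ?_⟩
  intro K hK
  rw [eq_bot_iff]
  intro g hg
  by_contra hg0
  have hg0' : g ≠ 0 := by simpa using hg0
  -- find z with z * g = A
  set v : ℕ := g.val with hv
  have hvlt : v < m := ZMod.val_lt g
  have hgv : ((v : ℕ) : ZMod m) = g := ZMod.natCast_rightInverse g
  have hv0 : v ≠ 0 := by
    intro h
    exact hg0' (by rw [← hgv, h, Nat.cast_zero])
  set d : ℕ := Int.gcd (v : ℤ) (m : ℤ) with hd
  have hdm : d ∣ m := by
    have := Int.gcd_dvd_right (a := (v:ℤ)) (b := (m:ℤ))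
    rwa [Int.natCast_dvd_natCast (m := d) (n := m)] at this
  have hdv : d ∣ v := by
    have := Int.gcd_dvd_left (a := (v:ℤ)) (b := (m:ℤ))
    rwa [Int.natCast_dvd_natCast] at this
  obtain ⟨i, hi, hdi⟩ := (Nat.dvd_prime_pow Nat.prime_two).mp (hm ▸ hdm)
  have hir : i ≤ r - 1 := by
    rcases Nat.lt_or_ge i r with h | h
    · omega
    · exfalso
      have : 2 ^ r ∣ v := by
        calc 2 ^ r ∣ 2 ^ i := pow_dvd_pow 2 h
        _ = d := hdi.symm
        _ ∣ v := hdv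
      have := Nat.le_of_dvd (by omega) this
      omega
  have hdA : d ∣ A := hdi ▸ (pow_dvd_pow 2 hir)
  obtain ⟨c, hc⟩ := hdA
  -- Bezout
  have hbez : (d : ℤ) = v * Int.gcdA v m + m * Int.gcdB v m := Int.gcd_eq_gcd_ab (v:ℤ) (m:ℤ)
  set z : ZMod m := ((Int.gcdA (v:ℤ) (m:ℤ) * c : ℤ) : ZMod m) with hz
  have hzg : z * g = ((A : ℕ) : ZMod m) := by
    have : ((A : ℤ) : ZMod m) = ((v * (Int.gcdA v m * c) : ℤ) : ZMod m) := by
      have hAc : (A : ℤ) = (v * Int.gcdA v m + m * Int.gcdB v m) * c := by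
        rw [← hbez]; exact_mod_cast hc
      rw [hAc]
      push_cast
      rw [ZMod.natCast_self]
      ring
    rw [hz, ← hgv]
    push_cast at this ⊢
    rw [this]
    push_cast
    ring
  have hcK : ((A : ℕ) : ZMod m) ∈ K := by
    rw [← hzg]
    have : z * g = z.val • g := by
      rw [nsmul_eq_mul]
      congr 1
      exact (ZMod.natCast_rightInverse z).symm
    rw [this]
    exact AddSubgroup.nsmul_mem K hg z.val
  have := hK hcK
  rw [hset] at this
  exact this hAm
end

section
/- Let R be a finite ring of order m whose additive group is G, and let W, S be nontrivial sequences over R with |S| ≥ |W| + D(G) - 1, where D(G) is the Davenport constant of G. If the multiplicity of 0 in S equals the maximum multiplicity h(S) of S and h(S) ≥ D(G) - 1, then Σ(W,S) = Σ_{|W|}(W,S), i.e., every element representable as a weighted subsequence sum of any length 1 ≤ k ≤ min(|W|,|S|) is representable as one of length exactly |W|. -/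
/-- The Davenport constant of (the additive group of) `G`: the least `d` such
that every sequence over `G` of length at least `d` has a nonempty zero-sum
subsequence. -/
noncomputable def DavenportConstant (G : Type*) [AddCommMonoid G] : ℕ :=
  sInf { d | ∀ S : Multiset G, d ≤ Multiset.card S →
      ∃ T, T ≤ S ∧ T ≠ 0 ∧ T.sum = 0 }

/-- Weighted `k`-term subsequence sums in a ring: all sums `Σ wᵢ sᵢ` over
`k`-term subsequences of `W` and of `S`, arbitrarily paired. -/
def wsumsR (R : Type*) [Ring R] (k : ℕ) (W S : Multiset R) : Set R :=
  { g | ∃ (w : List R) (s : List R), w.length = k ∧ s.length = k ∧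
      (w : Multiset R) ≤ W ∧ (s : Multiset R) ≤ S ∧
      g = ((w.zip s).map fun p => p.1 * p.2).sum }

section Aux
variable {R : Type*} [Ring R] [Fintype R] [DecidableEq R]

lemma davenport_card_mem :
    (Fintype.card R) ∈ { d | ∀ S : Multiset R, d ≤ Multiset.card S →
      ∃ T, T ≤ S ∧ T ≠ 0 ∧ T.sum = 0 } := by
  intro S hcard
  rw [← Multiset.coe_toList S]
  set l := S.toList with hl
  have hlen : Fintype.card R ≤ l.length := by rw [hl, Multiset.length_toList]; exact hcard
  have key : ∀ i j : Fin (l.length + 1), (i : ℕ) < (j : ℕ) →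
      (l.take ↑i).sum = (l.take ↑j).sum →
      ∃ T, T ≤ (↑l : Multiset R) ∧ T ≠ 0 ∧ T.sum = 0 := by
    intro i j hij hsum
    have hjle : (j : ℕ) ≤ l.length := Nat.lt_succ_iff.mp j.isLt
    have hlength : ((l.take ↑j).drop ↑i).length = ↑j - ↑i := by
      rw [List.length_drop, List.length_take]; omega
    refine ⟨↑((l.take ↑j).drop ↑i), ?_, ?_, ?_⟩
    · exact Multiset.coe_le.mpr (((l.take ↑j).drop_sublist ↑i).trans (l.take_sublist ↑j)).subperm
    · intro h
      rw [Multiset.coe_eq_zero] at h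
      rw [h] at hlength
      simp at hlength
      omega
    · have h3 := List.sum_take_add_sum_drop (l.take ↑j) ↑i
      rw [List.take_take, min_eq_left hij.le, ← hsum] at h3
      rw [Multiset.sum_coe]
      exact (add_eq_left).mp h3
  obtain ⟨i, j, hne, heq⟩ := Fintype.exists_ne_map_eq_of_card_lt
    (fun i : Fin (l.length + 1) => (l.take ↑i).sum)
    (by simpa using Nat.lt_succ_of_le hlen)
  rcases lt_or_gt_of_ne (fun h => hne (by exact_mod_cast Fin.ext (by exact_mod_cast congrArg Fin.val h))) with h | h
  · exact key i j h heq
  · exact key j i h heq.symm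

lemma davenport_spec (S : Multiset R) (h : DavenportConstant R ≤ Multiset.card S) :
    ∃ T, T ≤ S ∧ T ≠ 0 ∧ T.sum = 0 :=
  Nat.sInf_mem (⟨_, davenport_card_mem (R := R)⟩ : Set.Nonempty _) S h

lemma one_le_davenport : 1 ≤ DavenportConstant R := by
  rw [Nat.one_le_iff_ne_zero]
  intro h
  rcases Nat.sInf_eq_zero.mp h with h0 | hemp
  · obtain ⟨T, hT, hT0, -⟩ := h0 (0 : Multiset R) (by simp)
    exact hT0 (le_antisymm hT (zero_le))
  · exact absurd hemp (Set.nonempty_iff_ne_empty.mp ⟨_, davenport_card_mem (R := R)⟩)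

lemma davenport_small (S : Multiset R) (h : DavenportConstant R ≤ Multiset.card S) :
    ∃ T, T ≤ S ∧ T ≠ 0 ∧ T.sum = 0 ∧ Multiset.card T ≤ DavenportConstant R := by
  set D := DavenportConstant R with hD
  have hlen : (S.toList.take D).length = D := by
    rw [List.length_take, Multiset.length_toList]; omega
  have hle : (↑(S.toList.take D) : Multiset R) ≤ S :=
    (Multiset.coe_le.mpr (S.toList.take_sublist D).subperm).trans_eq (Multiset.coe_toList S)
  obtain ⟨T, hT, hT0, hTsum⟩ := davenport_spec ((S.toList.take D : List R) : Multiset R) (by rw [Multiset.coe_card, hlen])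
  refine ⟨T, hT.trans hle, hT0, hTsum, ?_⟩
  have := Multiset.card_le_card hT
  simpa [hlen] using this

lemma cons_le_of_mem_sub {α : Type*} [DecidableEq α] {a : α} {s t : Multiset α}
    (hs : s ≤ t) (ha : a ∈ t - s) : a ::ₘ s ≤ t := by
  rw [Multiset.le_iff_count]
  intro x
  have hc := Multiset.count_pos.2 ha
  rw [Multiset.count_sub] at hc
  have h2 := Multiset.le_iff_count.1 hs x
  have h3 := Multiset.le_iff_count.1 hs a
  rw [Multiset.count_cons]
  by_cases hx : x = a
  · subst hx; simp; omega
  · simp [hx]; omega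

set_option maxHeartbeats 1000000 in
lemma step_lemma (W S : Multiset R)
    (hlen : Multiset.card W + DavenportConstant R - 1 ≤ Multiset.card S)
    (hbig : DavenportConstant R - 1 ≤ S.count 0)
    {k : ℕ} (hk : k < Multiset.card W) {g : R}
    (hg : g ∈ wsumsR R k W S) : g ∈ wsumsR R (k + 1) W S := by
  obtain ⟨w, s, hwl, hsl, hwW, hsS, hsum⟩ := hg
  have hD1 : 1 ≤ DavenportConstant R := one_le_davenport
  set D := DavenportConstant R with hD
  set n := Multiset.card W with hn
  by_cases hcase : Multiset.count 0 (↑s : Multiset R) < Multiset.count 0 S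
  · -- a zero of `S` is unused: append it, paired with an unused weight
    have h0mem : (0 : R) ∈ S - ↑s := by
      rw [← Multiset.count_pos, Multiset.count_sub]; omega
    have hvex : ∃ v, v ∈ W - ↑w := by
      rw [← Multiset.card_pos_iff_exists_mem, Multiset.card_sub hwW, Multiset.coe_card, hwl]
      omega
    obtain ⟨v, hv⟩ := hvex
    refine ⟨v :: w, 0 :: s, by simp [hwl], by simp [hsl], ?_, ?_, ?_⟩
    · rw [← Multiset.cons_coe]; exact cons_le_of_mem_sub hwW hv
    · rw [← Multiset.cons_coe]; exact cons_le_of_mem_sub hsS h0mem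
    · simpa using hsum
  · -- all zeros of `S` are used in `s`
    push_neg at hcase
    have hzs : Multiset.count 0 (↑s : Multiset R) = Multiset.count 0 S :=
      le_antisymm (Multiset.le_iff_count.1 hsS 0) hcase
    set z := Multiset.count 0 S with hzdef
    set pL : List (R × R) := w.zip s with hpL
    have hwsl : w.length = s.length := by rw [hwl, hsl]
    have hmapfst : pL.map Prod.fst = w := List.map_fst_zip hwsl.le
    have hmapsnd : pL.map Prod.snd = s := List.map_snd_zip hwsl.ge
    have hpLlen : pL.length = k := by rw [hpL, List.length_zip, hwl, hsl]; simp
    set b : R × R → Bool := fun q => q.2 == 0 with hb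
    set pz : List (R × R) := pL.filter b with hpz
    set p0 : List (R × R) := pL.filter (fun q => !b q) with hp0
    have hperm : List.Perm (pz ++ p0) pL := List.filter_append_perm b pL
    have hpzlen : pz.length = z := by
      rw [hpz, ← List.countP_eq_length_filter]
      have h1 : List.countP b pL = List.countP (fun x => x == (0 : R)) (pL.map Prod.snd) := by
        rw [List.countP_map]; rfl
      rw [h1, hmapsnd, ← List.count_eq_countP, ← Multiset.coe_count, hzs]
    set m := p0.length with hm
    have hmz : m + z = k := by
      have h2 := hperm.length_eq
      rw [List.length_append, hpzlen, hpLlen] at h2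
      omega
    have hp0snd : ∀ q ∈ p0, q.2 ≠ 0 := by
      intro q hq
      have h3 := List.of_mem_filter hq
      simpa [hb] using h3
    set w0 : List R := p0.map Prod.fst with hw0
    set s0 : List R := p0.map Prod.snd with hs0
    have hp0sub : p0.Sublist pL := List.filter_sublist
    have hw0W : (↑w0 : Multiset R) ≤ W :=
      (Multiset.coe_le.mpr (hmapfst ▸ (hp0sub.map Prod.fst)).subperm).trans hwW
    have hs0S : (↑s0 : Multiset R) ≤ S :=
      (Multiset.coe_le.mpr (hmapsnd ▸ (hp0sub.map Prod.snd)).subperm).trans hsS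
    have hs0count : Multiset.count 0 (↑s0 : Multiset R) = 0 := by
      rw [Multiset.count_eq_zero]
      intro hmem
      rcases List.mem_map.mp (Multiset.mem_coe.mp hmem) with ⟨q, hq, hq2⟩
      exact hp0snd q hq hq2
    have hg0 : (p0.map fun q => q.1 * q.2).sum = g := by
      have h1 : (pL.map fun q => q.1 * q.2).sum
          = ((pz ++ p0).map fun q => q.1 * q.2).sum := ((hperm.map _).sum_eq).symm
      have h2 : (pz.map fun q => q.1 * q.2).sum = 0 := by
        apply List.sum_eq_zero
        intro x hx
        rcases List.mem_map.mp hx with ⟨q, hq, rfl⟩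
        have h3 := List.of_mem_filter hq
        have hq2 : q.2 = 0 := by simpa [hb] using h3
        simp [hq2]
      rw [hsum, h1, List.map_append, List.sum_append, h2, zero_add]
    set U : Multiset R := W - ↑w0 with hU
    set S' : Multiset R := S - ↑s0 with hS'
    have hw0len : Multiset.card (↑w0 : Multiset R) = m := by
      rw [Multiset.coe_card, hw0, List.length_map]
    have hUcard : Multiset.card U = n - m := by rw [hU, Multiset.card_sub hw0W, hw0len]
    have hS'card : Multiset.card S' = Multiset.card S - m := by
      rw [hS', Multiset.card_sub hs0S, Multiset.coe_card, hs0, List.length_map]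
    have hS'0 : Multiset.count 0 S' = z := by
      rw [hS', Multiset.count_sub, hs0count, ← hzdef]
      omega
    have hDz : D ≤ z + 1 := by omega
    have hUz1 : z + 1 ≤ Multiset.card U := by rw [hUcard]; omega
    have hUD : D ≤ Multiset.card U := by omega
    set N : Multiset R := S'.filter (fun x => ¬ x = 0) with hN
    have hsplit : Multiset.filter (fun x => x = 0) S' + N = S' :=
      Multiset.filter_add_not _ _
    have hfz : Multiset.filter (fun x => x = 0) S' = Multiset.replicate z 0 := by
      rw [Multiset.filter_eq', hS'0]
    have hNcard : Multiset.card N + z = Multiset.card S' := by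
      have h4 := congrArg Multiset.card hsplit
      rw [Multiset.card_add, hfz, Multiset.card_replicate] at h4
      omega
    have hND : D ≤ Multiset.card N := by omega
    set uL : List R := U.toList.take D with huL
    set nL : List R := N.toList.take D with hnL
    have huLlen : uL.length = D := by
      rw [huL, List.length_take, Multiset.length_toList]; omega
    have hnLlen : nL.length = D := by
      rw [hnL, List.length_take, Multiset.length_toList]; omega
    have huLle : (↑uL : Multiset R) ≤ U :=
      (Multiset.coe_le.mpr (U.toList.take_sublist D).subperm).trans_eq (Multiset.coe_toList U)
    have hnLle : (↑nL : Multiset R) ≤ N :=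
      (Multiset.coe_le.mpr (N.toList.take_sublist D).subperm).trans_eq (Multiset.coe_toList N)
    set pr : List (R × R) := uL.zip nL with hpr
    have hprlen : pr.length = D := by
      rw [hpr, List.length_zip, huLlen, hnLlen]; simp
    have hprfst : pr.map Prod.fst = uL := List.map_fst_zip (by rw [huLlen, hnLlen])
    have hprsnd : pr.map Prod.snd = nL := List.map_snd_zip (by rw [huLlen, hnLlen])
    obtain ⟨T, hTle, hT0, hTsum⟩ := davenport_spec
      ((pr.map fun q => q.1 * q.2 : List R) : Multiset R)
      (by rw [Multiset.coe_card, List.length_map, hprlen])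
    have hsubperm : T.toList.Subperm (pr.map fun q => q.1 * q.2) :=
      Multiset.coe_le.mp (by rw [Multiset.coe_toList]; exact hTle)
    obtain ⟨l', hl'perm, hl'sub⟩ := hsubperm
    obtain ⟨pr', hpr'sub, hl'eq⟩ := List.sublist_map_iff.mp hl'sub
    set r := pr'.length with hr
    have hr1 : 1 ≤ r := by
      by_contra h5
      push_neg at h5
      have h6 : pr' = [] := List.length_eq_zero_iff.mp (by omega)
      have h7 : l' = [] := by rw [hl'eq, h6]; rfl
      rw [h7] at hl'perm
      apply hT0
      rw [← Multiset.coe_toList T, hl'perm.symm.eq_nil]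
      rfl
    have hrD : r ≤ D := hpr'sub.length_le.trans_eq hprlen
    have hprsum : (pr'.map fun q => q.1 * q.2).sum = 0 := by
      rw [← hl'eq, hl'perm.sum_eq, Multiset.sum_toList, hTsum]
    set prW : List R := pr'.map Prod.fst with hprW
    set prS : List R := pr'.map Prod.snd with hprS
    have hprWle : (↑prW : Multiset R) ≤ U :=
      (Multiset.coe_le.mpr (hprfst ▸ (hpr'sub.map Prod.fst)).subperm).trans huLle
    have hprSle : (↑prS : Multiset R) ≤ N :=
      (Multiset.coe_le.mpr (hprsnd ▸ (hpr'sub.map Prod.snd)).subperm).trans hnLle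
    set U1 : Multiset R := U - ↑prW with hU1
    have hU1card : Multiset.card U1 = Multiset.card U - r := by
      rw [hU1, Multiset.card_sub hprWle, Multiset.coe_card, hprW, List.length_map]
    set t := z + 1 - r with ht
    set padW : List R := U1.toList.take t with hpadW
    have hpadlen : padW.length = t := by
      rw [hpadW, List.length_take, Multiset.length_toList]; omega
    have hpadle : (↑padW : Multiset R) ≤ U1 :=
      (Multiset.coe_le.mpr (U1.toList.take_sublist t).subperm).trans_eq (Multiset.coe_toList U1)
    set pad : List (R × R) := padW.map (fun v => (v, 0)) with hpad
    set P : List (R × R) := p0 ++ pr' ++ pad with hP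
    have hPlen : P.length = k + 1 := by
      rw [hP, List.length_append, List.length_append, hpad, List.length_map, hpadlen, ← hm, ← hr]
      omega
    have hPfst : P.map Prod.fst = w0 ++ prW ++ padW := by
      rw [hP, List.map_append, List.map_append, hpad, List.map_map]
      have h9 : (Prod.fst ∘ fun v : R => (v, (0:R))) = id := rfl
      rw [h9, List.map_id, hw0, hprW]
    have hPsnd : P.map Prod.snd = s0 ++ prS ++ List.replicate t (0 : R) := by
      rw [hP, List.map_append, List.map_append, hpad, List.map_map]
      have : (Prod.snd ∘ fun v : R => (v, (0:R))) = fun _ => (0:R) := rfl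
      rw [this, List.map_const', hpadlen, hs0, hprS]
    refine ⟨P.map Prod.fst, P.map Prod.snd, by rw [List.length_map, hPlen],
      by rw [List.length_map, hPlen], ?_, ?_, ?_⟩
    · rw [hPfst, ← Multiset.coe_add, ← Multiset.coe_add]
      rw [add_assoc]
      refine (le_tsub_iff_left hw0W).mp ?_
      rw [← hU]
      refine (le_tsub_iff_left hprWle).mp ?_
      rw [← hU1]
      exact hpadle
    · rw [hPsnd, ← Multiset.coe_add, ← Multiset.coe_add, Multiset.coe_replicate]
      rw [add_assoc]
      refine (le_tsub_iff_left hs0S).mp ?_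
      rw [← hS', ← hsplit, hfz, add_comm (Multiset.replicate z 0) N]
      exact add_le_add hprSle ((Multiset.replicate_le_replicate 0).mpr (by omega))
    · have hzipP : (P.map Prod.fst).zip (P.map Prod.snd) = P := by
        rw [List.zip_map']; simp
      rw [hzipP, hP, List.map_append, List.map_append, List.sum_append, List.sum_append]
      have hpadsum : (pad.map fun q => q.1 * q.2).sum = 0 := by
        apply List.sum_eq_zero
        intro x hx
        rcases List.mem_map.mp hx with ⟨q, hq, rfl⟩
        rcases List.mem_map.mp hq with ⟨v, hv, rfl⟩
        simp
      rw [hg0, hprsum, hpadsum, add_zero, add_zero]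

end Aux

theorem stmt7 (R : Type*) [Ring R] [Fintype R] [DecidableEq R]
    (W S : Multiset R) (hW : W ≠ 0) (hS : S ≠ 0)
    (hlen : Multiset.card W + DavenportConstant R - 1 ≤ Multiset.card S)
    (hmax : ∀ g : R, S.count g ≤ S.count 0)
    (hbig : DavenportConstant R - 1 ≤ S.count 0) :
    { g | ∃ k, 1 ≤ k ∧ k ≤ min (Multiset.card W) (Multiset.card S) ∧
        g ∈ wsumsR R k W S } =
      wsumsR R (Multiset.card W) W S := by
  have hD1 : 1 ≤ DavenportConstant R := one_le_davenport
  have hn1 : 1 ≤ Multiset.card W := Multiset.card_pos.mpr hW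
  have hnS : Multiset.card W ≤ Multiset.card S := by omega
  ext g
  constructor
  · rintro ⟨k, hk1, hk2, hg⟩
    have hkW : k ≤ Multiset.card W := le_trans hk2 (min_le_left _ _)
    have key : ∀ j, k ≤ j → j ≤ Multiset.card W → g ∈ wsumsR R j W S := by
      intro j hj
      induction j, hj using Nat.le_induction with
      | base => intro _; exact hg
      | succ j hj ih =>
        intro hjn
        exact step_lemma W S hlen hbig (by omega) (ih (by omega))
    exact key _ hkW le_rfl
  · intro hg
    exact ⟨Multiset.card W, hn1, by omega, hg⟩
end

section
/- For any sequence S over an abelian group G and integers n with h(S) ≤ n ≤ |S|, the sequence S admits an n-setpartition, i.e., a factorization S = A_1···A_n where each A_i is a nonempty subsequence with all terms distinct. Conversely, if S admits an n-setpartition, then h(S) ≤ n ≤ |S|. -/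
open Multiset Finset

lemma fwd_aux {G : Type*} [DecidableEq G] :
    ∀ (n : ℕ) (S : Multiset G), (∀ g : G, S.count g ≤ n) → n ≤ Multiset.card S →
      ∃ A : List (Multiset G), A.length = n ∧ (∀ a ∈ A, a ≠ 0 ∧ a.Nodup) ∧ A.sum = S := by
  intro n
  induction n with
  | zero =>
    intro S h _
    have hS : S = 0 := by
      rw [Multiset.eq_zero_iff_forall_notMem]
      intro g hg
      have := h g
      have := Multiset.count_pos.mpr hg
      omega
    exact ⟨[], rfl, by simp, by simp [hS]⟩
  | succ n ih =>
    intro S h hcard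
    set F₀ : Finset G := S.toFinset.filter (fun g => S.count g = n + 1) with hF₀
    have hsum : ∑ g ∈ S.toFinset, S.count g = Multiset.card S :=
      Multiset.toFinset_sum_count_eq S
    have hF₀sum : ∑ g ∈ F₀, S.count g = F₀.card * (n + 1) := by
      rw [Finset.sum_congr rfl (fun g hg => (Finset.mem_filter.mp hg).2)]
      simp [mul_comm, hF₀]
    have hle : F₀.card * (n + 1) ≤ Multiset.card S := by
      rw [← hF₀sum, ← hsum]
      exact Finset.sum_le_sum_of_subset (Finset.filter_subset _ _)
    have hm : F₀.card ≤ Multiset.card S - n := by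
      rcases Nat.eq_zero_or_pos F₀.card with h0 | h1
      · omega
      · have h2 : F₀.card + n ≤ Multiset.card S := by nlinarith
        omega
    set s := min S.toFinset.card (Multiset.card S - n) with hs
    have hF₀card : F₀.card ≤ s := le_min (Finset.card_le_card (Finset.filter_subset _ _)) hm
    have hstf : s ≤ S.toFinset.card := min_le_left _ _
    obtain ⟨F, hF₀F, hFS, hFcard⟩ := Finset.exists_subsuperset_card_eq
      (Finset.filter_subset (fun g => S.count g = n + 1) S.toFinset) hF₀card hstf
    have hSne : S ≠ 0 := by
      intro h0; rw [h0] at hcard; simp at hcard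
    have hs1 : 1 ≤ s := by
      refine le_min ?_ (by omega)
      rw [Nat.one_le_iff_ne_zero]
      simp [Finset.card_eq_zero, Multiset.toFinset_eq_empty, hSne]
    set B : Multiset G := F.val with hB
    have hBnodup : B.Nodup := F.nodup
    have hBcount : ∀ g, B.count g = if g ∈ F then 1 else 0 := by
      intro g
      split
      · exact Multiset.count_eq_one_of_mem F.nodup (by assumption)
      · exact Multiset.count_eq_zero_of_notMem (by assumption)
    have hBS : B ≤ S := by
      rw [Multiset.le_iff_count]
      intro g
      rw [hBcount]
      split
      · rename_i hg
        exact Multiset.one_le_count_iff_mem.mpr (Multiset.mem_toFinset.mp (hFS hg))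
      · exact Nat.zero_le _
    have hBcard : Multiset.card B = s := by rw [hB]; exact hFcard
    set S' := S - B with hS'
    have hrecon : B + S' = S := add_tsub_cancel_of_le hBS
    have hcount' : ∀ g : G, S'.count g ≤ n := by
      intro g
      rw [hS', Multiset.count_sub, hBcount]
      rcases Nat.lt_or_ge (S.count g) (n + 1) with hlt | hge
      · split <;> omega
      · have hgn : S.count g = n + 1 := le_antisymm (h g) hge
        have hgF : g ∈ F := hF₀F (Finset.mem_filter.mpr
          ⟨Multiset.mem_toFinset.mpr (Multiset.count_pos.mp (by omega)), hgn⟩)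
        simp [hgF, hgn]
    have hcard' : n ≤ Multiset.card S' := by
      have : Multiset.card S = Multiset.card B + Multiset.card S' := by
        rw [← hrecon]; simp
      rw [hBcard] at this
      omega
    obtain ⟨A', hlen, hprop, hsum'⟩ := ih S' hcount' hcard'
    refine ⟨B :: A', by simp [hlen], ?_, by simp [hsum', hrecon]⟩
    intro a ha
    rcases List.mem_cons.mp ha with rfl | ha'
    · refine ⟨?_, hBnodup⟩
      intro h0
      have := hBcard
      rw [h0] at this
      simp at this
      omega
    · exact hprop a ha'

theorem stmt10 (G : Type*) [AddCommGroup G] [DecidableEq G]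
    (S : Multiset G) (n : ℕ) :
    ((∀ g : G, S.count g ≤ n) ∧ n ≤ Multiset.card S) ↔
      ∃ A : List (Multiset G), A.length = n ∧
        (∀ a ∈ A, a ≠ 0 ∧ a.Nodup) ∧ A.sum = S := by
  constructor
  · rintro ⟨h1, h2⟩
    exact fwd_aux n S h1 h2
  · rintro ⟨A, hlen, hprop, rfl⟩
    subst hlen
    induction A with
    | nil => simp
    | cons a A ihA =>
      obtain ⟨ha0, hand⟩ := hprop a List.mem_cons_self
      have ihA' := ihA (fun b hb => hprop b (List.mem_cons_of_mem a hb))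
      constructor
      · intro g
        simp only [List.sum_cons, Multiset.count_add]
        have h1 : a.count g ≤ 1 := Multiset.nodup_iff_count_le_one.mp hand g
        have := ihA'.1 g
        simp only [List.length_cons]
        omega
      · simp only [List.sum_cons, Multiset.card_add, List.length_cons]
        have : 1 ≤ Multiset.card a := by
          rw [Nat.one_le_iff_ne_zero]
          simp [ha0]
        have := ihA'.2
        omega
end
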